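/- For a nonzero algebraic number α, the absolute logarithmic Weil height satisfies h(α) = 0 if and only if α is a root of unity (Kronecker's theorem). -/

import Mathlib

open scoped Classical in
/-- A nonzero algebraic integer in a number field all of whose conjugates have norm
at most `1` is a root of unity. -/
theorem aux_pow_eq_one {K : Type*} [Field K] [NumberField K] {x : K} (hx0 : x ≠ 0)
    (hxi : IsIntegral ℤ x) (hx : ∀ φ : K →+* ℂ, ‖φ x‖ ≤ 1) :
    ∃ n : ℕ, 0 < n ∧ x ^ n = 1 := by
  obtain ⟨a, -, b, -, habne, h⟩ :=
    @Set.Infinite.exists_ne_map_eq_of_mapsTo _ _ _ _ (x ^ · : ℕ → K) Set.infinite_univ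
      (by exact fun a _ => ⟨hxi.pow a, fun φ => by
        simpa [norm_pow] using pow_le_one₀ (norm_nonneg _) (hx φ)⟩)
      (NumberField.Embeddings.finite_of_norm_le K ℂ (1 : ℝ))
  wlog hlt : b < a
  · exact this hx0 hxi hx b a habne.symm h.symm (habne.lt_or_gt.resolve_right hlt)
  refine ⟨a - b, tsub_pos_of_lt hlt, ?_⟩
  rw [← Nat.sub_add_cancel hlt.le, pow_add, mul_left_eq_self₀] at h
  exact h.resolve_right (pow_ne_zero _ hx0)

/-- Kronecker's theorem. Since the Weil height is not available in Mathlib, the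
condition `h(α) = 0` is expressed by its standard characterization: `α` is an
algebraic integer all of whose complex embeddings have absolute value at most `1`.
For a nonzero algebraic number `α`, this holds if and only if `α` is a root of unity. -/
theorem stmt_8 (α : AlgebraicClosure ℚ) (hα : α ≠ 0) :
    (IsIntegral ℤ α ∧ ∀ φ : AlgebraicClosure ℚ →+* ℂ, ‖φ α‖ ≤ 1) ↔
      ∃ m : ℕ, 0 < m ∧ α ^ m = 1 := by
  constructor
  · rintro ⟨hint, hle⟩
    -- work in the number field ℚ⟮α⟯
    set K := IntermediateField.adjoin ℚ {α} with hK
    have hαK : α ∈ K := IntermediateField.mem_adjoin_simple_self ℚ α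
    have halg : IsIntegral ℚ α := hint.tower_top
    have : FiniteDimensional ℚ K := IntermediateField.adjoin.finiteDimensional halg
    have : NumberField K := ⟨⟩
    set x : K := ⟨α, hαK⟩ with hx
    have hxα : (algebraMap K (AlgebraicClosure ℚ)) x = α := rfl
    have hxint : IsIntegral ℤ x := by
      rw [← isIntegral_algebraMap_iff (algebraMap K (AlgebraicClosure ℚ)).injective, hxα]
      exact hint
    have hx0 : x ≠ 0 := by
      intro h
      apply hα
      rw [← hxα, h, map_zero]
    have hxle : ∀ φ : K →+* ℂ, ‖φ x‖ ≤ 1 := by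
      intro φ
      set_option synthInstance.maxHeartbeats 400000 in
      letI : Algebra K ℂ := φ.toAlgebra
      haveI : Algebra.IsAlgebraic K (AlgebraicClosure ℚ) :=
        ⟨fun y => ((AlgebraicClosure.isAlgebraic ℚ).isAlgebraic y).tower_top K⟩
      let ψ : AlgebraicClosure ℚ →ₐ[K] ℂ := IsAlgClosed.lift
      have hcomm : φ x = ψ.toRingHom α := (ψ.commutes x).symm
      rw [hcomm]
      simpa using hle ψ.toRingHom
    obtain ⟨n, hn, hxn⟩ := aux_pow_eq_one hx0 hxint hxle
    refine ⟨n, hn, ?_⟩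
    have := congrArg (algebraMap K (AlgebraicClosure ℚ)) hxn
    rwa [map_pow, hxα, map_one] at this
  · rintro ⟨m, hm, hαm⟩
    constructor
    · refine ⟨Polynomial.X ^ m - 1, ?_, ?_⟩
      · exact Polynomial.monic_X_pow_sub_C 1 hm.ne'
      · simp [hαm]
    · intro φ
      have : ‖φ α‖ ^ m = 1 := by
        rw [← norm_pow, ← map_pow, hαm, map_one, norm_one]
      by_contra h1
      push_neg at h1
      have := one_lt_pow₀ h1 hm.ne'
      linarith [this.trans_eq ‹‖φ α‖ ^ m = 1›]
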